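/- Let (V_{i,j}) be a point of R_{2n}, i.e. a collection of subspaces of W indexed by pairs (i,j) with 1 ≤ i ≤ j ≤ 2n−1, satisfying dim V_{i,j} = i, V_{i,j} ⊆ W_{i,j}, V_{i,j} ⊆ V_{i+1,j} whenever i+1 ≤ j, and pr_{j+1}(V_{i,j}) ⊆ V_{i,j+1} whenever j+1 ≤ 2n−1 (with W_{i,j} = span(w_1,…,w_i,w_{j+1},…,w_{2n})). Define (σV)_{i,j} = V_{2n−j,2n−i}^⊥ ∩ W_{i,j}, where U^⊥ is the orthogonal complement with respect to the symplectic form. Then dim((σV)_{i,j}) = i for all (i,j), the collection σV is again a point of R_{2n}, and σ(σV) = V. -/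

import Mathlib

noncomputable section

/-- The ambient 2n-dimensional complex vector space `W = ℂ^{2n}`. -/
abbrev Wsp (n : ℕ) := Fin (2*n) → ℂ

/-- The basis vector `w_k` (1-based index `k ∈ {1,…,2n}`). -/
def wvec (n k : ℕ) : Wsp n := fun i => if (i : ℕ) + 1 = k then 1 else 0

/-- The standard symplectic form: `⟨w_i, w_{2n+1-i}⟩ = 1` for `1 ≤ i ≤ n`,
and `⟨w_i, w_j⟩ = 0` for `j ≠ 2n+1-i`. -/
def sform (n : ℕ) (x y : Wsp n) : ℂ :=
  ∑ i : Fin (2*n), (if (i : ℕ) < n then 1 else -1) * x i *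
    y ⟨2*n - 1 - (i : ℕ), by have := i.isLt; omega⟩

/-- A subspace is isotropic if the symplectic form vanishes on it. -/
def IsIsotropic (n : ℕ) (U : Submodule ℂ (Wsp n)) : Prop :=
  ∀ u ∈ U, ∀ v ∈ U, sform n u v = 0

/-- The projection `pr_k` along `w_k` (1-based). -/
def prj (n k : ℕ) : Wsp n →ₗ[ℂ] Wsp n where
  toFun x := fun i => if (i : ℕ) + 1 = k then 0 else x i
  map_add' x y := by funext i; by_cases h : (i : ℕ) + 1 = k <;> simp [h]
  map_smul' c x := by funext i; by_cases h : (i : ℕ) + 1 = k <;> simp [h]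

/-- The subspace `W_{i,j} = span(w_1,…,w_i,w_{j+1},…,w_{2n})` (1-based). -/
def WIJ (n i j : ℕ) : Submodule ℂ (Wsp n) :=
  Submodule.span ℂ (wvec n '' {k | (1 ≤ k ∧ k ≤ i) ∨ (j + 1 ≤ k ∧ k ≤ 2*n)})

/-- Orthogonal complement with respect to the symplectic form. -/
def sperp (n : ℕ) (U : Submodule ℂ (Wsp n)) : Submodule ℂ (Wsp n) where
  carrier := {x | ∀ u ∈ U, sform n x u = 0}
  zero_mem' := by intro u hu; simp [sform]
  add_mem' := by
    intro a b ha hb u hu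
    have ha' := ha u hu
    have hb' := hb u hu
    simp only [sform, Pi.add_apply, add_mul, mul_add, Finset.sum_add_distrib] at *
    rw [ha', hb', add_zero]
  smul_mem' := by
    intro c a ha u hu
    have ha' := ha u hu
    simp only [sform, Pi.smul_apply, smul_eq_mul] at *
    calc ∑ i : Fin (2*n), (if (i : ℕ) < n then 1 else -1) * (c * a i) *
          u ⟨2*n - 1 - (i : ℕ), by have := i.isLt; omega⟩
        = c * ∑ i : Fin (2*n), (if (i : ℕ) < n then 1 else -1) * a i *
          u ⟨2*n - 1 - (i : ℕ), by have := i.isLt; omega⟩ := by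
          rw [Finset.mul_sum]; congr 1; funext i; ring
      _ = 0 := by rw [ha', mul_zero]

/-- The points of the Bott–Samelson type resolution `SpR_{2n}`:
collections `(V_{i,j})` for `1 ≤ i ≤ j`, `i+j ≤ 2n`. -/
structure IsSpR (n : ℕ) (V : ℕ → ℕ → Submodule ℂ (Wsp n)) : Prop where
  dim : ∀ i j, 1 ≤ i → i ≤ j → i + j ≤ 2*n → Module.finrank ℂ (V i j) = i
  sub : ∀ i j, 1 ≤ i → i ≤ j → i + j ≤ 2*n → V i j ≤ WIJ n i j
  mono : ∀ i j, 1 ≤ i → i + 1 ≤ j → (i + 1) + j ≤ 2*n → V i j ≤ V (i+1) j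
  proj : ∀ i j, 1 ≤ i → i ≤ j → i + (j+1) ≤ 2*n →
    Submodule.map (prj n (j+1)) (V i j) ≤ V i (j+1)
  isot : ∀ i, 1 ≤ i → i ≤ n → IsIsotropic n (V i (2*n - i))

/-- A point of `SpR_{2n}` lies in the divisor `Z_{i,j}` if
`V_{i,j} = V_{i-1,j+1} + ℂ w_{j+1}` (with `V_0 = 0`). -/
def InZ (n : ℕ) (V : ℕ → ℕ → Submodule ℂ (Wsp n)) (i j : ℕ) : Prop :=
  V i j = (if i = 1 then ⊥ else V (i-1) (j+1)) ⊔ Submodule.span ℂ {wvec n (j+1)}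

/-- The points of the `SL_{2n}` resolution `R_{2n}`: collections `(V_{i,j})`
for `1 ≤ i ≤ j ≤ 2n-1`. -/
structure IsR (n : ℕ) (V : ℕ → ℕ → Submodule ℂ (Wsp n)) : Prop where
  dim : ∀ i j, 1 ≤ i → i ≤ j → j ≤ 2*n - 1 → Module.finrank ℂ (V i j) = i
  sub : ∀ i j, 1 ≤ i → i ≤ j → j ≤ 2*n - 1 → V i j ≤ WIJ n i j
  mono : ∀ i j, 1 ≤ i → i + 1 ≤ j → j ≤ 2*n - 1 → V i j ≤ V (i+1) j
  proj : ∀ i j, 1 ≤ i → i ≤ j → j + 1 ≤ 2*n - 1 →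
    Submodule.map (prj n (j+1)) (V i j) ≤ V i (j+1)

namespace Stmt8Aux

open Module Submodule

variable {n : ℕ}

/-- The coefficient `ε_i`. -/
def eps (n : ℕ) (i : Fin (2*n)) : ℂ := if (i : ℕ) < n then 1 else -1

lemma eps_ne_zero (i : Fin (2*n)) : eps n i ≠ 0 := by
  unfold eps; split <;> simp

/-- Index reversal. -/
def rv (n : ℕ) (i : Fin (2*n)) : Fin (2*n) :=
  ⟨2*n - 1 - (i : ℕ), by have := i.isLt; omega⟩

@[simp] lemma rv_rv (i : Fin (2*n)) : rv n (rv n i) = i := by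
  have := i.isLt
  apply Fin.ext
  simp only [rv]
  omega

lemma rv_injective : Function.Injective (rv n) := by
  intro a b h
  rw [← rv_rv (n := n) a, h, rv_rv]

lemma sform_eq (x y : Wsp n) : sform n x y = ∑ i : Fin (2*n), eps n i * x i * y (rv n i) := rfl

/-- The symplectic form as a bilinear map. -/
def Bf (n : ℕ) : LinearMap.BilinForm ℂ (Wsp n) :=
  LinearMap.mk₂ ℂ (sform n)
    (fun x x' y => by
      simp only [sform_eq, Pi.add_apply, ← Finset.sum_add_distrib]
      exact Finset.sum_congr rfl fun i _ => by ring)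
    (fun c x y => by
      simp only [sform_eq, Pi.smul_apply, smul_eq_mul, Finset.mul_sum]
      exact Finset.sum_congr rfl fun i _ => by ring)
    (fun x y y' => by
      simp only [sform_eq, Pi.add_apply, ← Finset.sum_add_distrib]
      exact Finset.sum_congr rfl fun i _ => by ring)
    (fun c x y => by
      simp only [sform_eq, Pi.smul_apply, smul_eq_mul, Finset.mul_sum]
      exact Finset.sum_congr rfl fun i _ => by ring)

@[simp] lemma Bf_apply (x y : Wsp n) : Bf n x y = sform n x y := rfl

lemma eps_rv (i : Fin (2*n)) : eps n (rv n i) = - eps n i := by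
  have := i.isLt
  unfold eps rv
  by_cases h : (i : ℕ) < n
  · rw [if_pos h, if_neg (show ¬(2*n - 1 - (i : ℕ) < n) by omega)]
  · rw [if_neg h, if_pos (show 2*n - 1 - (i : ℕ) < n by omega)]; ring

lemma sform_antisymm (x y : Wsp n) : sform n y x = - sform n x y := by
  rw [sform_eq, sform_eq, ← Finset.sum_neg_distrib]
  apply Fintype.sum_equiv (Equiv.ofBijective (rv n)
    (Function.Involutive.bijective (fun i => rv_rv i)))
  intro i
  simp only [Equiv.ofBijective_apply]
  rw [eps_rv, rv_rv]
  ring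

lemma Bf_refl : (Bf n).IsRefl := by
  intro x y h
  simp only [Bf_apply] at *
  rw [sform_antisymm, h, neg_zero]

lemma sform_single_right (x : Wsp n) (k : Fin (2*n)) :
    sform n x (Pi.single k 1) = eps n (rv n k) * x (rv n k) := by
  rw [sform_eq, Finset.sum_eq_single (rv n k)]
  · rw [rv_rv, Pi.single_eq_same, mul_one]
  · intro i _ hi
    rw [Pi.single_eq_of_ne (fun hc => hi (by rw [← hc, rv_rv])), mul_zero]
  · intro h; exact absurd (Finset.mem_univ _) h

lemma sform_single_left (v : Wsp n) (k : Fin (2*n)) :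
    sform n (Pi.single k 1) v = eps n k * v (rv n k) := by
  rw [sform_eq, Finset.sum_eq_single k]
  · rw [Pi.single_eq_same, mul_one]
  · intro i _ hi
    rw [Pi.single_eq_of_ne hi, mul_zero, zero_mul]
  · intro h; exact absurd (Finset.mem_univ _) h

lemma Bf_nondeg : (Bf n).Nondegenerate := by
  refine ⟨?_, fun y hy => ?_⟩
  swap
  · funext m
    have h := hy (Pi.single (rv n m) 1)
    rw [Bf_apply, sform_single_left, rv_rv] at h
    exact (mul_eq_zero.mp h).resolve_left (eps_ne_zero _)
  intro x hx
  funext m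
  have h := hx (Pi.single (rv n m) 1)
  rw [Bf_apply, sform_single_right, rv_rv] at h
  have := eps_ne_zero (n := n) m
  exact (mul_eq_zero.mp h).resolve_left this

lemma mem_sperp {U : Submodule ℂ (Wsp n)} {x : Wsp n} :
    x ∈ sperp n U ↔ ∀ u ∈ U, sform n x u = 0 := Iff.rfl

lemma sperp_eq (U : Submodule ℂ (Wsp n)) : sperp n U = (Bf n).orthogonal U := by
  ext x
  rw [mem_sperp, LinearMap.BilinForm.mem_orthogonal_iff]
  constructor
  · intro h u hu
    show Bf n u x = 0
    rw [Bf_apply, sform_antisymm, h u hu, neg_zero]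
  · intro h u hu
    have := h u hu
    rw [Bf_apply, sform_antisymm] at this
    simpa using this

lemma fr_W : finrank ℂ (Wsp n) = 2*n := by
  rw [Module.finrank_fintype_fun_eq_card, Fintype.card_fin]

lemma finrank_sperp (U : Submodule ℂ (Wsp n)) :
    finrank ℂ (sperp n U) = 2*n - finrank ℂ U := by
  rw [sperp_eq, LinearMap.BilinForm.finrank_orthogonal Bf_nondeg, fr_W]

lemma sperp_sperp (U : Submodule ℂ (Wsp n)) : sperp n (sperp n U) = U := by
  rw [sperp_eq U, sperp_eq, LinearMap.BilinForm.orthogonal_orthogonal Bf_nondeg Bf_refl]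

lemma sperp_bot : sperp n (⊥ : Submodule ℂ (Wsp n)) = ⊤ := by
  rw [eq_top_iff]
  intro x _ u hu
  rw [Submodule.mem_bot] at hu
  rw [hu, ← Bf_apply, map_zero]

lemma eq_top_of_sperp_eq_bot {X : Submodule ℂ (Wsp n)} (h : sperp n X = ⊥) : X = ⊤ := by
  rw [← sperp_sperp X, h, sperp_bot]

lemma sperp_sup (A B : Submodule ℂ (Wsp n)) :
    sperp n (A ⊔ B) = sperp n A ⊓ sperp n B := by
  apply le_antisymm
  · exact le_inf (fun x hx u hu => hx u (le_sup_left (a := A) (b := B) hu))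
      (fun x hx u hu => hx u (le_sup_right (a := A) (b := B) hu))
  · rintro x ⟨hxA, hxB⟩ u hu
    obtain ⟨a, ha, b, hb, rfl⟩ := Submodule.mem_sup.mp hu
    rw [← Bf_apply, map_add, Bf_apply, Bf_apply, hxA a ha, hxB b hb, add_zero]

lemma mem_sperp_span {S : Set (Wsp n)} {x : Wsp n} :
    x ∈ sperp n (Submodule.span ℂ S) ↔ ∀ s ∈ S, sform n x s = 0 := by
  constructor
  · exact fun h s hs => h s (Submodule.subset_span hs)
  · intro h u hu
    induction hu using Submodule.span_induction with
    | mem s hs => exact h s hs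
    | zero => rw [← Bf_apply, map_zero]
    | add a b _ _ ha hb => rw [← Bf_apply, map_add, Bf_apply, Bf_apply, ha, hb, add_zero]
    | smul c a _ ha => rw [← Bf_apply, map_smul, Bf_apply, smul_eq_mul, ha, mul_zero]

/-- Coordinate subspace: coordinates in `[a, b)` vanish. -/
def outer (n a b : ℕ) : Submodule ℂ (Wsp n) where
  carrier := {x | ∀ k : Fin (2*n), a ≤ (k : ℕ) → (k : ℕ) < b → x k = 0}
  zero_mem' := fun _ _ _ => rfl
  add_mem' := by
    intro x y hx hy k h1 h2
    simp [Pi.add_apply, hx k h1 h2, hy k h1 h2]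
  smul_mem' := by
    intro c x hx k h1 h2
    simp [Pi.smul_apply, hx k h1 h2]

/-- Coordinate subspace: coordinates outside `[a, b)` vanish. -/
def innr (n a b : ℕ) : Submodule ℂ (Wsp n) where
  carrier := {x | ∀ k : Fin (2*n), ((k : ℕ) < a ∨ b ≤ (k : ℕ)) → x k = 0}
  zero_mem' := fun _ _ => rfl
  add_mem' := by
    intro x y hx hy k h
    simp [Pi.add_apply, hx k h, hy k h]
  smul_mem' := by
    intro c x hx k h
    simp [Pi.smul_apply, hx k h]

lemma mem_outer {a b : ℕ} {x : Wsp n} :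
    x ∈ outer n a b ↔ ∀ k : Fin (2*n), a ≤ (k : ℕ) → (k : ℕ) < b → x k = 0 := Iff.rfl

lemma mem_innr {a b : ℕ} {x : Wsp n} :
    x ∈ innr n a b ↔ ∀ k : Fin (2*n), ((k : ℕ) < a ∨ b ≤ (k : ℕ)) → x k = 0 := Iff.rfl

lemma wvec_single (k : Fin (2*n)) : wvec n ((k : ℕ) + 1) = Pi.single k 1 := by
  funext i
  by_cases h : i = k
  · subst h; simp [wvec]
  · have h' : ¬((i : ℕ) + 1 = (k : ℕ) + 1) := fun hc => h (Fin.ext (by omega))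
    simp [wvec, h', Pi.single_eq_of_ne h, Fin.val_ne_of_ne h]

lemma eq_sum_single (x : Wsp n) : x = ∑ k, x k • (Pi.single k 1 : Wsp n) := by
  funext i
  rw [Finset.sum_apply]
  simp [Pi.single_apply]

lemma WIJ_eq_outer (i j : ℕ) : WIJ n i j = outer n i j := by
  apply le_antisymm
  · rw [WIJ, Submodule.span_le]
    rintro _ ⟨m, hm, rfl⟩ k hk1 hk2
    show (if (k : ℕ) + 1 = m then (1:ℂ) else 0) = 0
    rw [if_neg]
    rcases hm with ⟨h1, h2⟩ | ⟨h1, h2⟩ <;> omega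
  · intro x hx
    rw [eq_sum_single x]
    apply Submodule.sum_mem
    intro k _
    by_cases h : x k = 0
    · rw [h, zero_smul]; exact Submodule.zero_mem _
    · apply Submodule.smul_mem
      apply Submodule.subset_span
      have hk : ¬(i ≤ (k : ℕ) ∧ (k : ℕ) < j) := fun hc => h (hx k hc.1 hc.2)
      have := k.isLt
      exact ⟨(k : ℕ) + 1, by simp only [Set.mem_setOf_eq]; omega, wvec_single k⟩

lemma outer_eq_span (a b : ℕ) :
    outer n a b = Submodule.span ℂ (Set.range
      (fun k : {k : Fin (2*n) // ¬(a ≤ (k : ℕ) ∧ (k : ℕ) < b)} => (Pi.single k.1 1 : Wsp n))) := by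
  apply le_antisymm
  · intro x hx
    rw [eq_sum_single x]
    apply Submodule.sum_mem
    intro k _
    by_cases h : x k = 0
    · rw [h, zero_smul]; exact Submodule.zero_mem _
    · apply Submodule.smul_mem
      apply Submodule.subset_span
      exact ⟨⟨k, fun hc => h (hx k hc.1 hc.2)⟩, rfl⟩
  · rw [Submodule.span_le]
    rintro _ ⟨⟨k, hk⟩, rfl⟩ m hm1 hm2
    have hmk : m ≠ k := fun hc => hk (hc ▸ ⟨hm1, hm2⟩)
    exact Pi.single_eq_of_ne hmk 1

/-- Counting. -/
def icoEquiv (a b N : ℕ) (hb : b ≤ N) :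
    {k : Fin N // a ≤ (k : ℕ) ∧ (k : ℕ) < b} ≃ Fin (b - a) where
  toFun k := ⟨(k.1 : ℕ) - a, by have := k.2; omega⟩
  invFun m := ⟨⟨a + (m : ℕ), by have := m.isLt; omega⟩, by have := m.isLt; constructor <;> simp <;> omega⟩
  left_inv k := by
    apply Subtype.ext; apply Fin.ext; have := k.2; simp; omega
  right_inv m := by
    apply Fin.ext; simp

lemma card_compl (a b : ℕ) (hab : a ≤ b) (hb : b ≤ 2*n) :
    Fintype.card {k : Fin (2*n) // ¬(a ≤ (k : ℕ) ∧ (k : ℕ) < b)} = a + (2*n - b) := by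
  rw [Fintype.card_subtype_compl, Fintype.card_fin,
    Fintype.card_congr (icoEquiv a b (2*n) hb), Fintype.card_fin]
  omega

lemma finrank_outer (a b : ℕ) (hab : a ≤ b) (hb : b ≤ 2*n) :
    finrank ℂ (outer n a b) = a + (2*n - b) := by
  rw [outer_eq_span]
  have hli : LinearIndependent ℂ
      (fun k : {k : Fin (2*n) // ¬(a ≤ (k : ℕ) ∧ (k : ℕ) < b)} => (Pi.single k.1 1 : Wsp n)) := by
    have := (Pi.basisFun ℂ (Fin (2*n))).linearIndependent
    have h2 := this.comp (fun k : {k : Fin (2*n) // ¬(a ≤ (k : ℕ) ∧ (k : ℕ) < b)} => k.1)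
      Subtype.val_injective
    have h3 : (⇑(Pi.basisFun ℂ (Fin (2*n))) ∘ fun k : {k : Fin (2*n) // ¬(a ≤ (k : ℕ) ∧ (k : ℕ) < b)} => k.1)
        = fun k : {k : Fin (2*n) // ¬(a ≤ (k : ℕ) ∧ (k : ℕ) < b)} => (Pi.single k.1 1 : Wsp n) := by
      funext k
      simp [Pi.basisFun_apply]
    rwa [h3] at h2
  rw [finrank_span_eq_card hli, card_compl a b hab hb]

lemma finrank_WIJ (i j : ℕ) (hij : i ≤ j) (hj : j ≤ 2*n) :
    finrank ℂ (WIJ n i j) = i + (2*n - j) := by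
  rw [WIJ_eq_outer, finrank_outer i j hij hj]

lemma sform_wvec (x : Wsp n) (m : ℕ) (h1 : 1 ≤ m) (h2 : m ≤ 2*n) :
    sform n x (wvec n m) = eps n ⟨2*n - m, by omega⟩ * x ⟨2*n - m, by omega⟩ := by
  have hw : wvec n m = Pi.single (⟨m - 1, by omega⟩ : Fin (2*n)) 1 := by
    funext i
    show (if (i : ℕ) + 1 = m then (1:ℂ) else 0) = _
    rw [Pi.single_apply]
    by_cases h : (i : ℕ) + 1 = m
    · rw [if_pos h, if_pos (Fin.ext (by simp; omega))]
    · rw [if_neg h, if_neg (fun hc => h (by rw [hc]; simp; omega))]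
  have hrv : rv n (⟨m - 1, by omega⟩ : Fin (2*n)) = ⟨2*n - m, by omega⟩ :=
    Fin.ext (by simp [rv]; omega)
  rw [hw, sform_single_right, hrv]

lemma sperp_WIJ (i j : ℕ) (hij : i ≤ j) (hj : j ≤ 2*n) :
    sperp n (WIJ n i j) = innr n (2*n - j) (2*n - i) := by
  ext x
  rw [WIJ, mem_sperp_span, mem_innr]
  constructor
  · intro h k hk
    have hklt := k.isLt
    have hm1 : 1 ≤ 2*n - (k : ℕ) := by omega
    have hm2 : 2*n - (k : ℕ) ≤ 2*n := by omega
    have hmem : (2*n - (k : ℕ)) ∈ {m | (1 ≤ m ∧ m ≤ i) ∨ (j + 1 ≤ m ∧ m ≤ 2*n)} := by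
      rcases hk with hk | hk
      · right; constructor <;> omega
      · left; constructor <;> omega
    have := h _ ⟨2*n - (k : ℕ), hmem, rfl⟩
    rw [sform_wvec x _ hm1 hm2] at this
    have hfin : (⟨2*n - (2*n - (k : ℕ)), by omega⟩ : Fin (2*n)) = k :=
      Fin.ext (by simp; omega)
    rw [hfin] at this
    exact (mul_eq_zero.mp this).resolve_left (eps_ne_zero _)
  · rintro h _ ⟨m, hm, rfl⟩
    rcases hm with ⟨hm1, hm2⟩ | ⟨hm1, hm2⟩
    · rw [sform_wvec x m (by omega) (by omega)]
      rw [h ⟨2*n - m, by omega⟩ (by simp; omega), mul_zero]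
    · rw [sform_wvec x m (by omega) (by omega)]
      rw [h ⟨2*n - m, by omega⟩ (by simp; omega), mul_zero]

lemma outer_inf_innr (a b : ℕ) : outer n a b ⊓ innr n a b = ⊥ := by
  rw [eq_bot_iff]
  rintro x ⟨h1, h2⟩
  rw [Submodule.mem_bot]
  funext k
  by_cases h : a ≤ (k : ℕ) ∧ (k : ℕ) < b
  · exact h1 k h.1 h.2
  · exact h2 k (by omega)

lemma key_dim (U : Submodule ℂ (Wsp n)) (i j : ℕ)
    (hi : 1 ≤ i) (hij : i ≤ j) (hj : j ≤ 2*n - 1) (hn : 1 ≤ n)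
    (hU : finrank ℂ U = 2*n - j) (hUW : U ≤ WIJ n (2*n - j) (2*n - i)) :
    finrank ℂ (sperp n U ⊓ WIJ n i j : Submodule ℂ (Wsp n)) = i := by
  have hfr1 : finrank ℂ (sperp n U) = j := by rw [finrank_sperp, hU]; omega
  have hfr2 : finrank ℂ (WIJ n i j) = i + (2*n - j) :=
    finrank_WIJ i j hij (by omega)
  have hsup : sperp n U ⊔ WIJ n i j = ⊤ := by
    apply eq_top_of_sperp_eq_bot
    rw [sperp_sup, sperp_sperp, sperp_WIJ i j hij (by omega)]
    rw [eq_bot_iff]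
    rintro x ⟨hx1, hx2⟩
    have hx1' : x ∈ outer n (2*n - j) (2*n - i) := by
      rw [← WIJ_eq_outer]; exact hUW hx1
    have := outer_inf_innr (n := n) (2*n - j) (2*n - i)
    rw [eq_bot_iff] at this
    exact this ⟨hx1', hx2⟩
  have hkey := Submodule.finrank_sup_add_finrank_inf_eq (sperp n U) (WIJ n i j)
  rw [hsup, hfr1, hfr2, finrank_top, fr_W] at hkey
  omega

lemma prj_apply (k : ℕ) (v : Wsp n) (m : Fin (2*n)) :
    prj n k v m = if (m : ℕ) + 1 = k then 0 else v m := rfl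

lemma prj_decomp (k : Fin (2*n)) (v : Wsp n) :
    v = prj n ((k : ℕ) + 1) v + v k • (Pi.single k 1 : Wsp n) := by
  funext m
  simp only [Pi.add_apply, Pi.smul_apply, smul_eq_mul, prj_apply]
  by_cases h : m = k
  · subst h; simp
  · have h' : ¬((m : ℕ) + 1 = (k : ℕ) + 1) := fun hc => h (Fin.ext (by omega))
    simp [h', Pi.single_eq_of_ne h, Fin.val_ne_of_ne h]

end Stmt8Aux

open Stmt8Aux Module

theorem statement8 (n : ℕ) (hn : 1 ≤ n)
    (V : ℕ → ℕ → Submodule ℂ (Wsp n)) (hV : IsR n V) :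
    (∀ i j, 1 ≤ i → i ≤ j → j ≤ 2*n - 1 →
      Module.finrank ℂ (sperp n (V (2*n - j) (2*n - i)) ⊓ WIJ n i j : Submodule ℂ (Wsp n)) = i) ∧
    IsR n (fun i j => sperp n (V (2*n - j) (2*n - i)) ⊓ WIJ n i j) ∧
    (∀ i j, 1 ≤ i → i ≤ j → j ≤ 2*n - 1 →
      sperp n (sperp n (V (2*n - (2*n - i)) (2*n - (2*n - j))) ⊓ WIJ n (2*n - j) (2*n - i))
        ⊓ WIJ n i j = V i j) := by
  have part1 : ∀ i j, 1 ≤ i → i ≤ j → j ≤ 2*n - 1 →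
      Module.finrank ℂ (sperp n (V (2*n - j) (2*n - i)) ⊓ WIJ n i j : Submodule ℂ (Wsp n)) = i := by
    intro i j hi hij hj
    refine key_dim _ i j hi hij hj hn ?_ ?_
    · exact hV.dim (2*n - j) (2*n - i) (by omega) (by omega) (by omega)
    · exact hV.sub (2*n - j) (2*n - i) (by omega) (by omega) (by omega)
  have hmono : ∀ i j, 1 ≤ i → i + 1 ≤ j → j ≤ 2*n - 1 →
      (sperp n (V (2*n - j) (2*n - i)) ⊓ WIJ n i j : Submodule ℂ (Wsp n)) ≤
      sperp n (V (2*n - j) (2*n - (i+1))) ⊓ WIJ n (i+1) j := by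
    intro i j hi hij hj x hx
    obtain ⟨hx1, hx2⟩ := Submodule.mem_inf.mp hx
    rw [WIJ_eq_outer, mem_outer] at hx2
    refine Submodule.mem_inf.mpr ⟨?_, ?_⟩
    · intro v hv
      have e1 : 2*n - (i+1) + 1 = 2*n - i := by omega
      have hpr := hV.proj (2*n - j) (2*n - (i+1)) (by omega) (by omega) (by omega)
      rw [e1] at hpr
      have hv1 : prj n (2*n - i) v ∈ V (2*n - j) (2*n - i) :=
        hpr (Submodule.mem_map_of_mem hv)
      have hz1 : sform n x (prj n (2*n - i) v) = 0 := mem_sperp.mp hx1 _ hv1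
      have hz2 : x (⟨i, by omega⟩ : Fin (2*n)) = 0 :=
        hx2 ⟨i, by omega⟩ (by exact le_rfl) (show i < j by omega)
      have hd := prj_decomp (n := n) ⟨2*n - i - 1, by omega⟩ v
      have e2 : ((⟨2*n - i - 1, by omega⟩ : Fin (2*n)) : ℕ) + 1 = 2*n - i := by
        show 2*n - i - 1 + 1 = 2*n - i; omega
      rw [e2] at hd
      have e3 : rv n (⟨2*n - i - 1, by omega⟩ : Fin (2*n)) = ⟨i, by omega⟩ :=
        Fin.ext (show 2*n - 1 - (2*n - i - 1) = i by omega)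
      rw [hd, ← Bf_apply, map_add, map_smul, Bf_apply, Bf_apply, hz1,
        sform_single_right, e3, hz2, mul_zero, smul_zero, add_zero]
    · rw [WIJ_eq_outer, mem_outer]
      intro k h1 h2
      exact hx2 k (by omega) h2
  have hproj : ∀ i j, 1 ≤ i → i ≤ j → j + 1 ≤ 2*n - 1 →
      Submodule.map (prj n (j+1)) (sperp n (V (2*n - j) (2*n - i)) ⊓ WIJ n i j) ≤
      (sperp n (V (2*n - (j+1)) (2*n - i)) ⊓ WIJ n i (j+1) : Submodule ℂ (Wsp n)) := by
    intro i j hi hij hj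
    rintro _ ⟨x, hx, rfl⟩
    obtain ⟨hx1, hx2⟩ := Submodule.mem_inf.mp hx
    rw [WIJ_eq_outer, mem_outer] at hx2
    refine Submodule.mem_inf.mpr ⟨?_, ?_⟩
    · intro v hv
      have e1 : 2*n - (j+1) + 1 = 2*n - j := by omega
      have hmn := hV.mono (2*n - (j+1)) (2*n - i) (by omega) (by omega) (by omega)
      rw [e1] at hmn
      have hz1 : sform n x v = 0 := mem_sperp.mp hx1 v (hmn hv)
      have hvW : v ∈ outer n (2*n - (j+1)) (2*n - i) := by
        rw [← WIJ_eq_outer]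
        exact hV.sub (2*n - (j+1)) (2*n - i) (by omega) (by omega) (by omega) hv
      have hz2 : v (⟨2*n - 1 - j, by omega⟩ : Fin (2*n)) = 0 :=
        mem_outer.mp hvW _ (show 2*n - (j+1) ≤ 2*n - 1 - j by omega)
          (show 2*n - 1 - j < 2*n - i by omega)
      have hd := prj_decomp (n := n) ⟨j, by omega⟩ x
      have hprjx : prj n (j+1) x
          = x - x ⟨j, by omega⟩ • (Pi.single (⟨j, by omega⟩ : Fin (2*n)) 1 : Wsp n) :=
        eq_sub_of_add_eq hd.symm
      have e3 : rv n (⟨j, by omega⟩ : Fin (2*n)) = ⟨2*n - 1 - j, by omega⟩ :=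
        Fin.ext rfl
      rw [hprjx, ← Bf_apply, map_sub, LinearMap.sub_apply, map_smul, LinearMap.smul_apply,
        Bf_apply, Bf_apply, hz1, sform_single_left, e3, hz2, mul_zero, smul_zero, sub_zero]
    · rw [WIJ_eq_outer, mem_outer]
      intro k h1 h2
      rw [prj_apply]
      by_cases hk : (k : ℕ) + 1 = j + 1
      · rw [if_pos hk]
      · rw [if_neg hk]
        exact hx2 k h1 (by omega)
  have part3 : ∀ i j, 1 ≤ i → i ≤ j → j ≤ 2*n - 1 →
      sperp n (sperp n (V (2*n - (2*n - i)) (2*n - (2*n - j))) ⊓ WIJ n (2*n - j) (2*n - i))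
        ⊓ WIJ n i j = V i j := by
    intro i j hi hij hj
    have e1 : 2*n - (2*n - i) = i := by omega
    have e2 : 2*n - (2*n - j) = j := by omega
    rw [e1, e2]
    have hXfr : Module.finrank ℂ
        (sperp n (V i j) ⊓ WIJ n (2*n - j) (2*n - i) : Submodule ℂ (Wsp n)) = 2*n - j := by
      have h := part1 (2*n - j) (2*n - i) (by omega) (by omega) (by omega)
      rwa [e1, e2] at h
    have hL : Module.finrank ℂ
        (sperp n (sperp n (V i j) ⊓ WIJ n (2*n - j) (2*n - i)) ⊓ WIJ n i j
          : Submodule ℂ (Wsp n)) = i :=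
      key_dim _ i j hi hij hj hn hXfr inf_le_right
    have hle : V i j ≤ sperp n (sperp n (V i j) ⊓ WIJ n (2*n - j) (2*n - i)) ⊓ WIJ n i j := by
      refine le_inf ?_ (hV.sub i j hi hij hj)
      intro v hv u hu
      have hu1 := (Submodule.mem_inf.mp hu).1
      have hz := mem_sperp.mp hu1 v hv
      rw [sform_antisymm u v, hz, neg_zero]
    exact (Submodule.eq_of_le_of_finrank_le hle
      (by rw [hL, hV.dim i j hi hij hj])).symm
  exact ⟨part1, ⟨part1, fun i j _ _ _ => inf_le_right, hmono, hproj⟩, part3⟩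
end
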